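/- For every p ≥ 1, the maximum K_p = sup_{x∈[0,1]} κ_p(x) of κ_p(x) = x(1-x)^p + (1-x)x^p satisfies (1/(p+1))(p/(p+1))^p ≤ K_p ≤ (1/(p+1))(p/(p+1))^p + 2^{-(1+p)}. -/

import Mathlib

noncomputable def kappa (p x : ℝ) : ℝ := x * (1 - x) ^ p + (1 - x) * x ^ p

noncomputable def Kmax (p : ℝ) : ℝ := sSup (kappa p '' Set.Icc (0:ℝ) 1)

lemma term_le (p : ℝ) (hp : 1 ≤ p) {x : ℝ} (hx0 : 0 ≤ x) (hx1 : x ≤ 1) :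
    x * (1 - x) ^ p ≤ (1 / (p + 1)) * (p / (1 + p)) ^ p := by
  have hp0 : (0:ℝ) < p := lt_of_lt_of_le one_pos hp
  have hp1 : (0:ℝ) < p + 1 := by linarith
  set w₁ : ℝ := 1 / (p + 1) with hw₁
  set w₂ : ℝ := p / (p + 1) with hw₂
  set a : ℝ := (p + 1) * x with ha
  set b : ℝ := ((p + 1) / p) * (1 - x) with hb
  have ha0 : 0 ≤ a := by positivity
  have hb0 : 0 ≤ b := by
    have : 0 ≤ 1 - x := by linarith
    positivity
  have hgm : a ^ w₁ * b ^ w₂ ≤ w₁ * a + w₂ * b :=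
    Real.geom_mean_le_arith_mean2_weighted (by positivity) (by positivity) ha0 hb0
      (by rw [hw₁, hw₂, ← add_div, show (1:ℝ) + p = p + 1 by ring, div_self (ne_of_gt hp1)])
  have hsum : w₁ * a + w₂ * b = 1 := by
    rw [hw₁, hw₂, ha, hb]; field_simp; ring
  rw [hsum] at hgm
  have hpow : (a ^ w₁ * b ^ w₂) ^ (p + 1) ≤ 1 := by
    have h := Real.rpow_le_rpow (by positivity) hgm (le_of_lt hp1)
    rwa [Real.one_rpow] at h
  have hlhs : (a ^ w₁ * b ^ w₂) ^ (p + 1) = a * b ^ p := by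
    rw [Real.mul_rpow (by positivity) (by positivity)]
    rw [← Real.rpow_mul ha0, ← Real.rpow_mul hb0]
    have e1 : w₁ * (p + 1) = 1 := by rw [hw₁]; field_simp
    have e2 : w₂ * (p + 1) = p := by rw [hw₂]; field_simp
    rw [e1, e2, Real.rpow_one]
  rw [hlhs] at hpow
  have hbp : b ^ p = ((p + 1) / p) ^ p * (1 - x) ^ p :=
    Real.mul_rpow (by positivity) (by linarith)
  rw [hbp, ha] at hpow
  have hc : (0:ℝ) < ((p + 1) / p) ^ p := by positivity
  have key : (p + 1) * ((p + 1) / p) ^ p * (x * (1 - x) ^ p) ≤ 1 := by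
    nlinarith [hpow]
  have hinv : (1 / (p + 1)) * (p / (1 + p)) ^ p
      = 1 / ((p + 1) * ((p + 1) / p) ^ p) := by
    have h1 : (p / (1 + p)) ^ p * ((p + 1) / p) ^ p = 1 := by
      rw [← Real.mul_rpow (by positivity) (by positivity)]
      have : p / (1 + p) * ((p + 1) / p) = 1 := by field_simp; ring
      rw [this, Real.one_rpow]
    field_simp
    nlinarith [h1]
  rw [hinv]
  rw [le_div_iff₀ (by positivity)]
  nlinarith [key]

lemma term2_le (p : ℝ) (hp : 1 ≤ p) {x : ℝ} (hx0 : 0 ≤ x) (hx : x ≤ 1/2) :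
    (1 - x) * x ^ p ≤ 1 / 2 ^ (1 + p) := by
  have h2 : (0:ℝ) < 2 ^ (1 + p) := by positivity
  rcases eq_or_lt_of_le hx0 with h | h
  · rw [← h, Real.zero_rpow (by positivity)]
    simp [le_of_lt h2]
  · have hxp : x ^ p = x * x ^ (p - 1) := by
      have e : x ^ ((1:ℝ) + (p - 1)) = x ^ (1:ℝ) * x ^ (p - 1) := Real.rpow_add h _ _
      rw [Real.rpow_one] at e
      have e2 : x ^ p = x ^ ((1:ℝ) + (p - 1)) := by norm_num
      exact e2.trans e
    have h1 : x ^ (p - 1) ≤ (1/2 : ℝ) ^ (p - 1) :=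
      Real.rpow_le_rpow hx0 hx (by linarith)
    have h2' : (1 - x) * x ≤ 1/4 := by nlinarith
    have h3 : (0:ℝ) ≤ x ^ (p - 1) := Real.rpow_nonneg hx0 _
    have h4 : (1 - x) * x ^ p ≤ (1/4) * (1/2:ℝ) ^ (p - 1) := by
      rw [hxp]
      calc (1 - x) * (x * x ^ (p - 1)) = ((1 - x) * x) * x ^ (p - 1) := by ring
        _ ≤ (1/4) * (1/2:ℝ) ^ (p - 1) := by
            apply mul_le_mul h2' h1 h3 (by norm_num)
    have h5 : (1/4 : ℝ) * (1/2:ℝ) ^ (p - 1) = 1 / 2 ^ (1 + p) := by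
      rw [Real.div_rpow (by norm_num) (by norm_num), Real.one_rpow]
      rw [show (1:ℝ)/4 = 1 / 2 ^ (2:ℝ) by norm_num [Real.rpow_two]]
      rw [div_mul_div_comm, one_mul, ← Real.rpow_add (by norm_num)]
      rw [show (2:ℝ) + (p - 1) = 1 + p by ring]
    linarith
  
lemma kappa_le (p : ℝ) (hp : 1 ≤ p) {x : ℝ} (hx0 : 0 ≤ x) (hx1 : x ≤ 1) :
    kappa p x ≤ (1 / (p + 1)) * (p / (1 + p)) ^ p + 1 / 2 ^ (1 + p) := by
  unfold kappa
  rcases le_total x (1/2) with h | h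
  · have t1 := term_le p hp hx0 hx1
    have t2 := term2_le p hp hx0 h
    linarith
  · have t1 := term_le p hp (by linarith : (0:ℝ) ≤ 1 - x) (by linarith)
    have t2 := term2_le p hp (by linarith : (0:ℝ) ≤ 1 - x) (by linarith)
    have e1 : (1:ℝ) - (1 - x) = x := by ring
    rw [e1] at t1 t2
    linarith

/-- Sandwich bounds for `K_p = sup_{x∈[0,1]} κ_p(x)`. -/
theorem Kmax_bounds (p : ℝ) (hp : 1 ≤ p) :
    (1 / (p + 1)) * (p / (1 + p)) ^ p ≤ Kmax p ∧
    Kmax p ≤ (1 / (p + 1)) * (p / (1 + p)) ^ p + 1 / 2 ^ (1 + p) := by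
  have hp1 : (0:ℝ) < p + 1 := by linarith
  set M := (1 / (p + 1)) * (p / (1 + p)) ^ p with hM
  have hMB := fun x (hx : x ∈ Set.Icc (0:ℝ) 1) => kappa_le p hp hx.1 hx.2
  have hbdd : BddAbove (kappa p '' Set.Icc (0:ℝ) 1) := by
    refine ⟨M + 1 / 2 ^ (1 + p), ?_⟩
    rintro y ⟨x, hx, rfl⟩
    exact hMB x hx
  constructor
  · set x₀ : ℝ := 1 / (p + 1) with hx₀
    have hx₀mem : x₀ ∈ Set.Icc (0:ℝ) 1 := by
      constructor
      · positivity
      · rw [hx₀, div_le_one hp1]; linarith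
    have hκ : M ≤ kappa p x₀ := by
      unfold kappa
      have hne2 : p + 1 ≠ 0 := ne_of_gt hp1
      have e : 1 - x₀ = p / (1 + p) := by
        rw [hx₀, show (1:ℝ) + p = p + 1 by ring, eq_div_iff hne2, sub_mul, one_mul,
          one_div, inv_mul_cancel₀ hne2]
        ring
      rw [e, hM]
      have hx00 : (0:ℝ) ≤ x₀ := by rw [hx₀]; positivity
      have ht : 0 ≤ p / (1 + p) * x₀ ^ p :=
        mul_nonneg (by positivity) (Real.rpow_nonneg hx00 p)
      rw [hx₀]
      nlinarith [ht]
    exact le_trans hκ (le_csSup hbdd ⟨x₀, hx₀mem, rfl⟩)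
  · apply Real.sSup_le
    · rintro y ⟨x, hx, rfl⟩
      exact hMB x hx
    · have : (0:ℝ) ≤ M := by
        rw [hM]
        have h01 : (0:ℝ) ≤ p / (1 + p) := by positivity
        positivity
      have h2 : (0:ℝ) < 2 ^ (1 + p) := by positivity
      positivity
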